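/- Let T be the 4×4 matrix over ℂ[λ₄,λ₆,λ₈,λ₁₀] with rows (4λ₄, 6λ₆, 8λ₈, 10λ₁₀), (6λ₆, 8λ₈ − (12/5)λ₄², 10λ₁₀ − (8/5)λ₄λ₆, −(4/5)λ₄λ₈), (8λ₈, 10λ₁₀ − (8/5)λ₄λ₆, 4λ₄λ₈ − (12/5)λ₆², 6λ₄λ₁₀ − (6/5)λ₆λ₈), (10λ₁₀, −(4/5)λ₄λ₈, 6λ₄λ₁₀ − (6/5)λ₆λ₈, 4λ₆λ₁₀ − (8/5)λ₈²), and define the derivations ℓ₀, ℓ₂, ℓ₄, ℓ₆ of ℂ[λ₄,λ₆,λ₈,λ₁₀] by (ℓ₀, ℓ₂, ℓ₄, ℓ₆)ᵀ = T·(∂/∂λ₄, ∂/∂λ₆, ∂/∂λ₈, ∂/∂λ₁₀)ᵀ. Set Δ = (16/5)·det T. Then Δ is a homogeneous polynomial of degree 40 with respect to the grading deg λⱼ = j, and ℓ₀Δ = 40Δ, ℓ₂Δ = 0, ℓ₄Δ = 12λ₄Δ, ℓ₆Δ = 4λ₆Δ; in particular the fields ℓ₀, ℓ₂, ℓ₄,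 ℓ₆ are tangent to the hypersurface {Δ = 0}. -/

import Mathlib

open MvPolynomial

noncomputable section

/-- The polynomial ring ℂ[λ₄,λ₆,λ₈,λ₁₀];
`X 0 = λ₄`, `X 1 = λ₆`, `X 2 = λ₈`, `X 3 = λ₁₀`. -/
abbrev R4 : Type := MvPolynomial (Fin 4) ℂ

def l4 : R4 := X 0
def l6 : R4 := X 1
def l8 : R4 := X 2
def l10 : R4 := X 3

/-- The matrix `T`. -/
def T : Matrix (Fin 4) (Fin 4) R4 :=
  !![4 * l4, 6 * l6, 8 * l8, 10 * l10;
     6 * l6, 8 * l8 - C (12/5 : ℂ) * l4 ^ 2, 10 * l10 - C (8/5 : ℂ) * l4 * l6,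
       -(C (4/5 : ℂ)) * l4 * l8;
     8 * l8, 10 * l10 - C (8/5 : ℂ) * l4 * l6, 4 * l4 * l8 - C (12/5 : ℂ) * l6 ^ 2,
       6 * l4 * l10 - C (6/5 : ℂ) * l6 * l8;
     10 * l10, -(C (4/5 : ℂ)) * l4 * l8, 6 * l4 * l10 - C (6/5 : ℂ) * l6 * l8,
       4 * l6 * l10 - C (8/5 : ℂ) * l8 ^ 2]

/-- The derivations `ℓ₀, ℓ₂, ℓ₄, ℓ₆`: `ℓᵢ = ∑ⱼ Tᵢⱼ ∂/∂λⱼ` (rows `i = 0,1,2,3`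
correspond to `ℓ₀, ℓ₂, ℓ₄, ℓ₆`). -/
def ell (i : Fin 4) (P : R4) : R4 := ∑ j : Fin 4, T i j * pderiv j P

/-- Δ = (16/5)·det T -/
def Δ : R4 := C (16/5 : ℂ) * T.det

/-- The grading `deg λ₄ = 4`, `deg λ₆ = 6`, `deg λ₈ = 8`, `deg λ₁₀ = 10`. -/
def w : Fin 4 → ℕ := ![4, 6, 8, 10]


lemma pow_hom (i : Fin 4) (k : ℕ) : IsWeightedHomogeneous w ((X i : R4) ^ k) (k * w i) := by
  induction k with
  | zero => simpa using isWeightedHomogeneous_C w (1 : ℂ)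
  | succ n ih =>
      have h := ih.mul (isWeightedHomogeneous_X ℂ w i)
      rw [← pow_succ] at h
      have : n * w i + w i = (n + 1) * w i := by ring
      rwa [this] at h

lemma mono_hom (a : ℂ) (k0 k1 k2 k3 n : ℕ)
    (h : 4 * k0 + 6 * k1 + 8 * k2 + 10 * k3 = n) :
    IsWeightedHomogeneous w
      ((C a : R4) * X 0 ^ k0 * X 1 ^ k1 * X 2 ^ k2 * X 3 ^ k3) n := by
  have h0 := ((((isWeightedHomogeneous_C w a).mul (pow_hom 0 k0)).mul (pow_hom 1 k1)).mul
      (pow_hom 2 k2)).mul (pow_hom 3 k3)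
  have hw : 0 + k0 * w 0 + k1 * w 1 + k2 * w 2 + k3 * w 3 = n := by
    simp [w]; omega
  rwa [hw] at h0

set_option maxHeartbeats 1000000 in
def DEXP : R4 :=
  ((C (32000 : ℂ) * X 0 ^ 0 * X 1 ^ 0 * X 2 ^ 0 * X 3 ^ 4) +
      (C (65536/25 : ℂ) * X 0 ^ 0 * X 1 ^ 0 * X 2 ^ 5 * X 3 ^ 0) +
      (C (-16384 : ℂ) * X 0 ^ 0 * X 1 ^ 1 * X 2 ^ 3 * X 3 ^ 1) +
      (C (23040 : ℂ) * X 0 ^ 0 * X 1 ^ 2 * X 2 ^ 1 * X 3 ^ 2) +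
      (C (-6912/25 : ℂ) * X 0 ^ 0 * X 1 ^ 4 * X 2 ^ 2 * X 3 ^ 0) +
      (C (27648/25 : ℂ) * X 0 ^ 0 * X 1 ^ 5 * X 2 ^ 0 * X 3 ^ 1) +
      (C (20480 : ℂ) * X 0 ^ 1 * X 1 ^ 0 * X 2 ^ 2 * X 3 ^ 2) +
      (C (-38400 : ℂ) * X 0 ^ 1 * X 1 ^ 1 * X 2 ^ 0 * X 3 ^ 3) +
      (C (36864/25 : ℂ) * X 0 ^ 1 * X 1 ^ 2 * X 2 ^ 3 * X 3 ^ 0) +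
      (C (-32256/5 : ℂ) * X 0 ^ 1 * X 1 ^ 3 * X 2 ^ 1 * X 3 ^ 1) +
      (C (-32768/25 : ℂ) * X 0 ^ 2 * X 1 ^ 0 * X 2 ^ 4 * X 3 ^ 0) +
      (C (28672/5 : ℂ) * X 0 ^ 2 * X 1 ^ 1 * X 2 ^ 2 * X 3 ^ 1) +
      (C (8448 : ℂ) * X 0 ^ 2 * X 1 ^ 2 * X 2 ^ 0 * X 3 ^ 2) +
      (C (-9216 : ℂ) * X 0 ^ 3 * X 1 ^ 0 * X 2 ^ 1 * X 3 ^ 2) +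
      (C (-1024/25 : ℂ) * X 0 ^ 3 * X 1 ^ 2 * X 2 ^ 2 * X 3 ^ 0) +
      (C (4096/25 : ℂ) * X 0 ^ 3 * X 1 ^ 3 * X 2 ^ 0 * X 3 ^ 1) +
      (C (4096/25 : ℂ) * X 0 ^ 4 * X 1 ^ 0 * X 2 ^ 3 * X 3 ^ 0) +
      (C (-18432/25 : ℂ) * X 0 ^ 4 * X 1 ^ 1 * X 2 ^ 1 * X 3 ^ 1) +
      (C (27648/25 : ℂ) * X 0 ^ 5 * X 1 ^ 0 * X 2 ^ 0 * X 3 ^ 2) : R4)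

set_option maxHeartbeats 1000000 in
lemma hDelta : Δ = DEXP := by
  apply MvPolynomial.funext
  intro x
  rw [Δ, map_mul, eval_C, RingHom.map_det, RingHom.mapMatrix_apply]
  have hT : T.map (eval x) =
      !![4 * x 0, 6 * x 1, 8 * x 2, 10 * x 3;
         6 * x 1, 8 * x 2 - (12/5) * x 0 ^ 2, 10 * x 3 - (8/5) * x 0 * x 1, -(4/5) * x 0 * x 2;
         8 * x 2, 10 * x 3 - (8/5) * x 0 * x 1, 4 * x 0 * x 2 - (12/5) * x 1 ^ 2,
           6 * x 0 * x 3 - (6/5) * x 1 * x 2;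
         10 * x 3, -(4/5) * x 0 * x 2, 6 * x 0 * x 3 - (6/5) * x 1 * x 2,
           4 * x 1 * x 3 - (8/5) * x 2 ^ 2] := by
    ext i j
    fin_cases i <;> fin_cases j <;>
      simp [T, l4, l6, l8, l10] <;> ring
  rw [hT]
  simp [Matrix.det_succ_row_zero, Fin.sum_univ_succ, DEXP, Fin.succAbove, Fin.castSucc,
    Fin.castAdd, Fin.castLE]
  ring_nf

lemma hom_DEXP : IsWeightedHomogeneous w DEXP 40 := by
  rw [DEXP]
  exact (((((((((((((((((((mono_hom (32000 : ℂ) 0 0 0 4 40 (by norm_num)).add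
      (mono_hom (65536/25 : ℂ) 0 0 5 0 40 (by norm_num))).add
      (mono_hom (-16384 : ℂ) 0 1 3 1 40 (by norm_num))).add
      (mono_hom (23040 : ℂ) 0 2 1 2 40 (by norm_num))).add
      (mono_hom (-6912/25 : ℂ) 0 4 2 0 40 (by norm_num))).add
      (mono_hom (27648/25 : ℂ) 0 5 0 1 40 (by norm_num))).add
      (mono_hom (20480 : ℂ) 1 0 2 2 40 (by norm_num))).add
      (mono_hom (-38400 : ℂ) 1 1 0 3 40 (by norm_num))).add
      (mono_hom (36864/25 : ℂ) 1 2 3 0 40 (by norm_num))).add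
      (mono_hom (-32256/5 : ℂ) 1 3 1 1 40 (by norm_num))).add
      (mono_hom (-32768/25 : ℂ) 2 0 4 0 40 (by norm_num))).add
      (mono_hom (28672/5 : ℂ) 2 1 2 1 40 (by norm_num))).add
      (mono_hom (8448 : ℂ) 2 2 0 2 40 (by norm_num))).add
      (mono_hom (-9216 : ℂ) 3 0 1 2 40 (by norm_num))).add
      (mono_hom (-1024/25 : ℂ) 3 2 2 0 40 (by norm_num))).add
      (mono_hom (4096/25 : ℂ) 3 3 0 1 40 (by norm_num))).add
      (mono_hom (4096/25 : ℂ) 4 0 3 0 40 (by norm_num))).add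
      (mono_hom (-18432/25 : ℂ) 4 1 1 1 40 (by norm_num))).add
      (mono_hom (27648/25 : ℂ) 5 0 0 2 40 (by norm_num)))

lemma ell_apply (i : Fin 4) (P : R4) :
    ell i P = T i 0 * pderiv 0 P + T i 1 * pderiv 1 P + T i 2 * pderiv 2 P + T i 3 * pderiv 3 P := by
  rw [ell, Fin.sum_univ_four]

set_option maxHeartbeats 1000000 in
lemma ell_tac (i : Fin 4) (Q : R4)
    (hQ : ∀ x : Fin 4 → ℂ,
      eval x (T i 0) * eval x (pderiv 0 DEXP) + eval x (T i 1) * eval x (pderiv 1 DEXP) +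
      eval x (T i 2) * eval x (pderiv 2 DEXP) + eval x (T i 3) * eval x (pderiv 3 DEXP)
        = eval x Q) :
    ell i DEXP = Q := by
  apply MvPolynomial.funext
  intro x
  rw [ell_apply]
  simpa using hQ x

set_option maxHeartbeats 4000000 in
theorem discriminant_properties :
    Δ.IsWeightedHomogeneous w 40 ∧
    ell 0 Δ = 40 * Δ ∧ ell 1 Δ = 0 ∧ ell 2 Δ = 12 * l4 * Δ ∧ ell 3 Δ = 4 * l6 * Δ := by
  refine ⟨hDelta ▸ hom_DEXP, ?_, ?_, ?_, ?_⟩ <;> rw [hDelta] <;>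
    [ (apply ell_tac 0 (40 * DEXP)); (apply ell_tac 1 0);
      (apply ell_tac 2 (12 * l4 * DEXP)); (apply ell_tac 3 (4 * l6 * DEXP))] <;>
  · intro x
    simp only [DEXP, T, l4, l6, l8, l10, Matrix.cons_val', Matrix.cons_val_zero,
      Matrix.cons_val_one, Matrix.head_cons, Matrix.cons_val_two, Matrix.cons_val_three,
      Matrix.tail_cons, Matrix.head_fin_const, Matrix.empty_val', Matrix.cons_val_fin_one,
      Matrix.of_apply, map_add, map_sub, map_neg, map_mul, pderiv_mul, pderiv_pow, pderiv_C,
      pderiv_X_self, pderiv_X, Pi.single_eq_same]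
    simp
    ring


end
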